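/- Let S be a simply connected compact subset of the plane ℝ² and let C ⊆ S be a simple closed curve. Then every bounded connected component of ℝ² \ C is contained in S; that is, the bounded region enclosed by C lies in S. -/

import Mathlib

open Complex Set

noncomputable section

/-- A loop `γ : [0,1] → ℂ∖{0}` has a *closed logarithm* if there is a continuous
`g` with `exp ∘ g = γ` and `g 0 = g 1`. -/
def HasClosedLog (γ : unitInterval → ℂ) : Prop :=
  ∃ g : unitInterval → ℂ, Continuous g ∧ (∀ t, Complex.exp (g t) = γ t) ∧ g 0 = g 1

lemma hasClosedLog_const {c : ℂ} (hc : c ≠ 0) : HasClosedLog (fun _ => c) :=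
  ⟨fun _ => Complex.log c, continuous_const, fun _ => Complex.exp_log hc, rfl⟩

lemma HasClosedLog.of_close {γ₁ γ₂ : unitInterval → ℂ} (h₂ : HasClosedLog γ₂)
    (hc : Continuous γ₁) (hloop : γ₁ 0 = γ₁ 1)
    (hclose : ∀ t, ‖γ₁ t - γ₂ t‖ < ‖γ₂ t‖) : HasClosedLog γ₁ := by
  obtain ⟨g, hg, hexp, hg01⟩ := h₂
  have hγ₂ne : ∀ t, γ₂ t ≠ 0 := by
    intro t h
    have h1 := hclose t
    rw [h] at h1
    simp only [sub_zero, norm_zero] at h1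
    exact absurd h1 (not_lt.mpr (norm_nonneg _))
  have hγ₂c : Continuous γ₂ := by
    have : γ₂ = fun t => Complex.exp (g t) := by ext t; rw [hexp]
    rw [this]; exact Complex.continuous_exp.comp hg
  set ρ : unitInterval → ℂ := fun t => γ₁ t / γ₂ t with hρdef
  have hρc : Continuous ρ := hc.div hγ₂c hγ₂ne
  have hρ1 : ∀ t, ‖ρ t - 1‖ < 1 := by
    intro t
    have h2 := hγ₂ne t
    have heq : ρ t - 1 = (γ₁ t - γ₂ t) / γ₂ t := by
      simp only [hρdef]
      rw [eq_div_iff h2, sub_mul, div_mul_cancel₀ _ h2, one_mul]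
    rw [heq, norm_div, div_lt_one (norm_pos_iff.mpr h2)]
    exact hclose t
  have hρslit : ∀ t, ρ t ∈ Complex.slitPlane := by
    intro t
    rw [Complex.mem_slitPlane_iff]
    left
    have h1 := hρ1 t
    have h2 : |(ρ t - 1).re| ≤ ‖ρ t - 1‖ := Complex.abs_re_le_norm _
    have h3 : (ρ t - 1).re = (ρ t).re - 1 := by simp
    rw [h3] at h2
    have := abs_le.mp h2
    linarith [this.1, h1]
  have hρne : ∀ t, ρ t ≠ 0 := fun t => Complex.slitPlane_ne_zero (hρslit t)
  refine ⟨fun t => g t + Complex.log (ρ t), hg.add (hρc.clog hρslit), ?_, ?_⟩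
  · intro t
    rw [Complex.exp_add, hexp, Complex.exp_log (hρne t), hρdef]
    exact mul_div_cancel₀ _ (hγ₂ne t)
  · have hρ01 : ρ 0 = ρ 1 := by
      simp only [hρdef]
      rw [hloop]
      congr 1
      rw [← hexp, ← hexp, hg01]
    simp only []
    rw [hg01, hρ01]

lemma HasClosedLog.of_homotopy {H : unitInterval × unitInterval → ℂ}
    (hH : Continuous H) (hne : ∀ x, H x ≠ 0)
    (hloop : ∀ s, H (0, s) = H (1, s)) {s₀ : unitInterval}
    (h0 : HasClosedLog (fun t => H (t, s₀))) :
    ∀ s₁, HasClosedLog (fun t => H (t, s₁)) := by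
  -- minimum of ‖H‖ on the compact square
  obtain ⟨x₀, -, hx₀'⟩ := isCompact_univ.exists_isMinOn (univ_nonempty)
    ((hH.norm).continuousOn (s := univ))
  have hx₀ : ∀ y : unitInterval × unitInterval, ‖H x₀‖ ≤ ‖H y‖ := by
    intro y; exact hx₀' (mem_univ y)
  set m : ℝ := ‖H x₀‖ with hm
  have hmpos : 0 < m := norm_pos_iff.mpr (hne x₀)
  obtain ⟨δ, hδpos, hδ⟩ := Metric.uniformContinuous_iff.mp
    (CompactSpace.uniformContinuous_of_continuous hH) m hmpos
  -- key transfer step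
  have key : ∀ s s' : unitInterval, dist s s' < δ →
      HasClosedLog (fun t => H (t, s)) → HasClosedLog (fun t => H (t, s')) := by
    intro s s' hd hs
    refine hs.of_close (hH.comp (continuous_id.prodMk continuous_const)) ?_ ?_
    · exact hloop s'
    · intro t
      have hdist : dist ((t, s') : unitInterval × unitInterval) (t, s) < δ := by
        rw [Prod.dist_eq]
        simp only [dist_self]
        rw [max_lt_iff]
        exact ⟨hδpos, by rwa [dist_comm]⟩
      have := hδ hdist
      rw [dist_eq_norm] at this
      calc ‖H (t, s') - H (t, s)‖ < m := this
        _ ≤ ‖H (t, s)‖ := hx₀ (t, s)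
  intro s₁
  -- clopen argument
  set A : Set unitInterval := {s | HasClosedLog fun t => H (t, s)} with hA
  have hopen : IsOpen A := by
    rw [Metric.isOpen_iff]
    intro s hs
    exact ⟨δ, hδpos, fun s' hs' => key s s' (by rw [dist_comm]; exact Metric.mem_ball.mp hs') hs⟩
  have hclosed : IsClosed A := by
    rw [← isOpen_compl_iff, Metric.isOpen_iff]
    intro s hs
    refine ⟨δ, hδpos, fun s' hs' hs'A => hs ?_⟩
    exact key s' s (Metric.mem_ball.mp hs') hs'A
  have : A = univ := IsClopen.eq_univ ⟨hclosed, hopen⟩ ⟨s₀, h0⟩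
  have : s₁ ∈ A := this ▸ mem_univ s₁
  exact this

lemma continuous_int_valued_eq (k : unitInterval → ℂ) (hk : Continuous k)
    (hint : ∀ t, ∃ n : ℤ, k t = n) : k 0 = k 1 := by
  set A : Set unitInterval := {t | k t = k 0} with hA
  have hclosed : IsClosed A := isClosed_eq hk continuous_const
  have hopen : IsOpen A := by
    rw [Metric.isOpen_iff]
    intro t ht
    obtain ⟨ε, hεpos, hε⟩ := Metric.continuousAt_iff.mp (hk.continuousAt : ContinuousAt k t) 1 one_pos
    refine ⟨ε, hεpos, fun t' ht' => ?_⟩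
    have hd := hε ht'
    obtain ⟨n, hn⟩ := hint t'
    obtain ⟨n', hn'⟩ := hint t
    have h1 : dist (k t') (k t) < 1 := hd
    rw [hn, hn', dist_eq_norm] at h1
    have : ((n - n' : ℤ) : ℂ) = (n : ℂ) - n' := by push_cast; ring
    rw [← this] at h1
    have hnorm : ‖((n - n' : ℤ) : ℂ)‖ = |((n - n' : ℤ) : ℝ)| := by
      rw [← Complex.ofReal_intCast, Complex.norm_real, Real.norm_eq_abs]
    rw [hnorm] at h1
    have : n - n' = 0 := by
      by_contra hne0
      have := Int.one_le_abs hne0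
      have : (1 : ℝ) ≤ |((n - n' : ℤ) : ℝ)| := by
        rw [← Int.cast_abs]
        exact_mod_cast this
      linarith
    have hnn' : n = n' := by omega
    show k t' = k 0
    rw [hn, hnn', ← hn']
    exact ht
  have hAuniv : A = univ := IsClopen.eq_univ ⟨hclosed, hopen⟩ ⟨0, rfl⟩
  have h1A : (1 : unitInterval) ∈ A := by rw [hAuniv]; trivial
  exact (h1A : k 1 = k 0).symm

lemma not_hasClosedLog_circle {R : ℝ} (hR : 0 < R) :
    ¬ HasClosedLog (fun t : unitInterval =>
        (R : ℂ) * Complex.exp (2 * Real.pi * Complex.I * (t : ℝ))) := by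
  rintro ⟨g, hg, hexp, hg01⟩
  set k : unitInterval → ℂ :=
    fun t => (g t - 2 * Real.pi * Complex.I * (t : ℝ) - (Real.log R : ℂ)) / (2 * Real.pi * Complex.I)
    with hk
  have h2πI : (2 * (Real.pi : ℂ) * Complex.I) ≠ 0 := by
    simp [Real.pi_ne_zero, Complex.I_ne_zero]
  have hint : ∀ t, ∃ n : ℤ, k t = n := by
    intro t
    have h1 : Complex.exp (g t - 2 * Real.pi * Complex.I * (t : ℝ) - (Real.log R : ℂ)) = 1 := by
      have hRC : (R : ℂ) ≠ 0 := Complex.ofReal_ne_zero.mpr hR.ne'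
      rw [Complex.exp_sub, Complex.exp_sub, hexp]
      rw [← Complex.ofReal_exp, Real.exp_log hR]
      show (R:ℂ) * Complex.exp (2 * Real.pi * Complex.I * (t:ℝ)) /
        Complex.exp (2 * Real.pi * Complex.I * (t:ℝ)) / (R:ℂ) = 1
      rw [mul_div_assoc, div_self (Complex.exp_ne_zero _), mul_one, div_self hRC]
    obtain ⟨n, hn⟩ := Complex.exp_eq_one_iff.mp h1
    refine ⟨n, ?_⟩
    show (g t - 2 * Real.pi * Complex.I * (t : ℝ) - (Real.log R : ℂ)) / (2 * Real.pi * Complex.I) = n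
    rw [hn]
    exact mul_div_cancel_right₀ _ h2πI
  have hkc : Continuous k := by
    apply Continuous.div_const
    apply Continuous.sub
    apply Continuous.sub hg
    · exact (continuous_const.mul (Complex.continuous_ofReal.comp continuous_subtype_val))
    · exact continuous_const
  have hkeq := continuous_int_valued_eq k hkc hint
  rw [hk] at hkeq
  simp only [Set.Icc.coe_zero, Set.Icc.coe_one, Complex.ofReal_zero, Complex.ofReal_one] at hkeq
  rw [div_eq_div_iff h2πI h2πI] at hkeq
  rw [hg01] at hkeq
  apply h2πI
  have h2 : (2 * (Real.pi:ℂ) * Complex.I) * (2 * (Real.pi:ℂ) * Complex.I) ≠ 0 := mul_ne_zero h2πI h2πI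
  have := mul_right_cancel₀ h2πI hkeq
  linear_combination this

namespace BCSH

abbrev E2 := EuclideanSpace ℝ (Fin 2)

noncomputable def ψ : E2 ≃ₗᵢ[ℝ] ℂ :=
  (Complex.isometryOfOrthonormal (EuclideanSpace.basisFun (Fin 2) ℝ)).symm

lemma abs_exp2πi (r : ℝ) :
    ‖Complex.exp (2 * Real.pi * Complex.I * (r : ℂ))‖ = 1 := by
  have h : (2 * Real.pi * Complex.I * (r : ℂ)) = ((2 * Real.pi * r : ℝ) : ℂ) * Complex.I := by
    push_cast; ring
  rw [h, Complex.norm_exp_ofReal_mul_I]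

noncomputable def es (t : unitInterval) : Metric.sphere (0 : E2) 1 :=
  ⟨ψ.symm (Complex.exp (2 * Real.pi * Complex.I * ((t : ℝ) : ℂ))), by
    rw [mem_sphere_zero_iff_norm, ψ.symm.norm_map]
    exact abs_exp2πi _⟩

lemma es_continuous : Continuous es := by
  apply Continuous.subtype_mk
  exact ψ.symm.continuous.comp (Complex.continuous_exp.comp
    (continuous_const.mul (Complex.continuous_ofReal.comp continuous_subtype_val)))

lemma es_zero_eq_one : es 0 = es 1 := by
  apply Subtype.ext
  show ψ.symm _ = ψ.symm _
  congr 1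
  rw [show (((0 : unitInterval) : ℝ) : ℂ) = 0 by norm_num,
    show (((1 : unitInterval) : ℝ) : ℂ) = 1 by norm_num]
  rw [mul_zero, Complex.exp_zero, mul_one, Complex.exp_two_pi_mul_I]

lemma es_surjective : Function.Surjective es := by
  intro z
  have hz : ‖ψ (z : E2)‖ = 1 := by
    rw [ψ.norm_map]
    exact mem_sphere_zero_iff_norm.mp z.2
  set θ := (ψ (z : E2)).arg with hθdef
  have hexp : Complex.exp ((θ : ℂ) * Complex.I) = ψ (z : E2) := by
    have := Complex.norm_mul_exp_arg_mul_I (ψ (z : E2))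
    rwa [hz, Complex.ofReal_one, one_mul] at this
  have hπ : (0:ℝ) < Real.pi := Real.pi_pos
  have hθle : θ ≤ Real.pi := Complex.arg_le_pi _
  have hθgt : -Real.pi < θ := Complex.neg_pi_lt_arg _
  have key : ∀ t : unitInterval, (2 * Real.pi * Complex.I * ((t:ℝ):ℂ)
      = (θ:ℂ) * Complex.I + (if 0 ≤ θ then 0 else 2 * Real.pi * Complex.I)) → es t = z := by
    intro t ht
    apply Subtype.ext
    show ψ.symm _ = (z : E2)
    rw [ht]
    split_ifs with h
    · rw [add_zero, hexp]; exact ψ.symm_apply_apply _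
    · rw [Complex.exp_add, hexp, Complex.exp_two_pi_mul_I, mul_one]
      exact ψ.symm_apply_apply _
  by_cases hθ : 0 ≤ θ
  · refine ⟨⟨θ / (2 * Real.pi), ⟨by positivity, ?_⟩⟩, key _ ?_⟩
    · rw [div_le_one (by positivity)]; linarith
    · simp only [hθ, if_pos]
      rw [add_zero]
      push_cast
      field_simp [Complex.ofReal_ne_zero.mpr hπ.ne']
  · push_neg at hθ
    refine ⟨⟨θ / (2 * Real.pi) + 1, ⟨?_, ?_⟩⟩, key _ ?_⟩
    · have h1 : -1 ≤ θ / (2 * Real.pi) := by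
        rw [neg_le, ← neg_div]
        rw [div_le_one (by positivity)]
        linarith
      linarith
    · have : θ / (2 * Real.pi) ≤ 0 := by
        apply div_nonpos_of_nonpos_of_nonneg hθ.le (by positivity)
      linarith
    · rw [if_neg (not_le.mpr hθ)]
      push_cast
      field_simp [Complex.ofReal_ne_zero.mpr hπ.ne']

lemma es_eq_cases {t t' : unitInterval} (h : es t = es t') :
    t = t' ∨ (t = 0 ∧ t' = 1) ∨ (t = 1 ∧ t' = 0) := by
  have hπ : (0:ℝ) < Real.pi := Real.pi_pos
  have h2πI : (2 * (Real.pi : ℂ) * Complex.I) ≠ 0 := by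
    simp [Real.pi_ne_zero, Complex.I_ne_zero]
  have hexp : Complex.exp (2 * Real.pi * Complex.I * ((t:ℝ):ℂ))
      = Complex.exp (2 * Real.pi * Complex.I * ((t':ℝ):ℂ)) := by
    have := congrArg Subtype.val h
    exact ψ.symm.injective this
  obtain ⟨n, hn⟩ := Complex.exp_eq_exp_iff_exists_int.mp hexp
  have hreal : ((t:ℝ):ℂ) = ((t':ℝ):ℂ) + (n : ℂ) := by
    apply mul_left_cancel₀ h2πI
    rw [hn]; ring
  have hr : (t : ℝ) = (t' : ℝ) + n := by exact_mod_cast hreal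
  have ht0 : (0:ℝ) ≤ t := t.2.1
  have ht1 : (t : ℝ) ≤ 1 := t.2.2
  have ht0' : (0:ℝ) ≤ t' := t'.2.1
  have ht1' : (t' : ℝ) ≤ 1 := t'.2.2
  have hn1 : (-1 : ℝ) ≤ (n : ℝ) := by linarith
  have hn2 : ((n : ℝ)) ≤ 1 := by linarith
  have hnn : n = -1 ∨ n = 0 ∨ n = 1 := by
    have h1 : (-1 : ℤ) ≤ n := by exact_mod_cast hn1
    have h2 : n ≤ (1 : ℤ) := by exact_mod_cast hn2
    omega
  rcases hnn with h' | h' | h'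
  · subst h'
    right; left
    have heq : (t : ℝ) = (t' : ℝ) - 1 := by rw [hr]; push_cast; ring
    constructor
    · apply Subtype.ext; show (t:ℝ) = 0; linarith
    · apply Subtype.ext; show (t':ℝ) = 1; linarith
  · subst h'
    left
    apply Subtype.ext
    rw [hr]; push_cast; ring
  · subst h'
    right; right
    constructor
    · apply Subtype.ext; show (t:ℝ) = 1; push_cast at hr; linarith
    · apply Subtype.ext; show (t':ℝ) = 0; push_cast at hr; linarith

lemma frontier_cci {C : Set E2} (hC : IsClosed C) (p : E2) :
    frontier (connectedComponentIn Cᶜ p) ⊆ C := by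
  intro x hx
  by_contra hxC
  set U := connectedComponentIn Cᶜ p with hU
  have hUopen : IsOpen U := hC.isOpen_compl.connectedComponentIn
  have hxcl : x ∈ closure U := hx.1
  have hxU : x ∉ U := by
    intro h
    exact hx.2 (by rwa [hUopen.interior_eq])
  have hxmem : x ∈ Cᶜ := hxC
  set V := connectedComponentIn Cᶜ x with hV
  have hVopen : IsOpen V := hC.isOpen_compl.connectedComponentIn
  have hxV : x ∈ V := mem_connectedComponentIn hxmem
  obtain ⟨y, hyV, hyU⟩ := mem_closure_iff.mp hxcl V hVopen hxV
  have h1 := connectedComponentIn_eq (F := Cᶜ) hyV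
  have h2 := connectedComponentIn_eq (F := Cᶜ) hyU
  exact hxU (by rw [hU, h2, ← h1]; exact hxV)

end BCSH

open BCSH


/-- A simple closed curve in the plane: a subset homeomorphic to the unit circle, i.e.
the image of an injective continuous map from the circle into the plane. -/
def IsSimpleClosedCurve (C : Set (EuclideanSpace ℝ (Fin 2))) : Prop :=
  ∃ f : ↥(Metric.sphere (0 : EuclideanSpace ℝ (Fin 2)) 1) → EuclideanSpace ℝ (Fin 2),
    Continuous f ∧ Function.Injective f ∧ Set.range f = C

/-- If `S` is a simply connected compact subset of the plane and `C ⊆ S` is a simple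
closed curve, then every bounded connected component of `ℝ² \ C` is contained in `S`. -/
theorem bounded_component_subset_of_simplyConnected
    (S : Set (EuclideanSpace ℝ (Fin 2)))
    (hScpt : IsCompact S) (hSsc : SimplyConnectedSpace S)
    (C : Set (EuclideanSpace ℝ (Fin 2)))
    (hCS : C ⊆ S) (hC : IsSimpleClosedCurve C) :
    ∀ p ∈ Cᶜ, Bornology.IsBounded (connectedComponentIn Cᶜ p) →
      connectedComponentIn Cᶜ p ⊆ S := by
  classical
  intro p hp hbd
  by_contra hsub
  rw [Set.not_subset] at hsub
  obtain ⟨q, hqU, hqS⟩ := hsub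
  obtain ⟨f, hfc, hfi, hfr⟩ := hC
  haveI := hSsc
  set U := connectedComponentIn Cᶜ p with hUdef
  have hCcpt : IsCompact C := by rw [← hfr]; exact isCompact_range hfc
  have hCcl : IsClosed C := hCcpt.isClosed
  have hUopen : IsOpen U := hCcl.isOpen_compl.connectedComponentIn
  have hmemS : ∀ z, f z ∈ S := fun z => hCS (hfr ▸ Set.mem_range_self z)
  -- the curve as a loop in S
  set x₀ : ↥S := ⟨f (es 0), hmemS _⟩ with hx₀
  set γ : Path x₀ x₀ :=
    { toFun := fun t => ⟨f (es t), hmemS _⟩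
      continuous_toFun := Continuous.subtype_mk (hfc.comp es_continuous) _
      source' := rfl
      target' := by
        apply Subtype.ext
        show f (es 1) = f (es 0)
        rw [← es_zero_eq_one] } with hγ
  obtain ⟨Hty⟩ := SimplyConnectedSpace.paths_homotopic γ (Path.refl x₀)
  set Φ : ↥S → ℂ := fun z => ψ (z : E2) - ψ q with hΦ
  have hΦne : ∀ z, Φ z ≠ 0 := by
    intro z h
    have h2 : ψ (z : E2) = ψ q := by rwa [sub_eq_zero] at h
    have h3 := ψ.injective h2
    exact hqS (h3 ▸ z.2)
  have hΦc : Continuous Φ := (ψ.continuous.comp continuous_subtype_val).sub continuous_const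
  set Hm : unitInterval × unitInterval → ℂ := fun ts => Φ (Hty (ts.2, ts.1)) with hHm
  have hHmc : Continuous Hm :=
    hΦc.comp (Hty.continuous.comp (continuous_snd.prodMk continuous_fst))
  have hHmne : ∀ x, Hm x ≠ 0 := fun x => hΦne _
  have hHmloop : ∀ s, Hm (0, s) = Hm (1, s) := by
    intro s
    show Φ (Hty (s, 0)) = Φ (Hty (s, 1))
    rw [Path.Homotopy.source, Path.Homotopy.target]
  have h1log : HasClosedLog (fun t => Hm (t, 1)) := by
    have he : (fun t => Hm (t, 1)) = fun _ => Φ x₀ := by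
      funext t
      show Φ (Hty (1, t)) = Φ x₀
      congr 1
      rw [Hty.apply_one]
      rfl
    rw [he]
    exact hasClosedLog_const (hΦne x₀)
  have h0log := HasClosedLog.of_homotopy hHmc hHmne hHmloop h1log 0
  have hγlog : HasClosedLog (fun t => ψ (f (es t)) - ψ q) := by
    have he : (fun t => Hm (t, 0)) = fun t => ψ (f (es t)) - ψ q := by
      funext t
      show Φ (Hty (0, t)) = _
      rw [Hty.apply_zero]
      rfl
    rwa [he] at h0log
  obtain ⟨g, hgc, hgexp, hg01⟩ := hγlog
  have hgwell : ∀ t t', es t = es t' → g t = g t' := by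
    intro t t' h
    rcases es_eq_cases h with h' | ⟨h1, h2⟩ | ⟨h1, h2⟩
    · rw [h']
    · rw [h1, h2, hg01]
    · rw [h1, h2, ← hg01]
  -- descend the logarithm to the sphere, then to C
  set τ : Metric.sphere (0 : E2) 1 → unitInterval := Function.surjInv es_surjective with hτdef
  have hτ : ∀ z, es (τ z) = z := Function.surjInv_eq es_surjective
  set ℓs : Metric.sphere (0 : E2) 1 → ℂ := fun z => g (τ z) with hℓs
  have hℓses : ∀ t, ℓs (es t) = g t := fun t => hgwell _ _ (hτ (es t))
  have hqm : Topology.IsQuotientMap es :=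
    (es_continuous.isClosedMap).isQuotientMap es_continuous es_surjective
  have hℓsc : Continuous ℓs := by
    rw [hqm.continuous_iff]
    have he : ℓs ∘ es = g := funext hℓses
    rw [he]; exact hgc
  have hℓsexp : ∀ z, Complex.exp (ℓs z) = ψ (f z) - ψ q := by
    intro z
    have h1 := hgexp (τ z)
    simp only [] at h1
    rw [hτ] at h1
    exact h1
  set eqv : Metric.sphere (0 : E2) 1 ≃ ↥C :=
    (Equiv.ofInjective f hfi).trans (Equiv.setCongr hfr) with heqv
  have heqvc : Continuous eqv := Continuous.subtype_mk hfc _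
  set hom : Metric.sphere (0 : E2) 1 ≃ₜ ↥C := heqvc.homeoOfEquivCompactToT2 with hhom
  have hominv : ∀ c : ↥C, f (hom.symm c) = (c : E2) := by
    intro c
    have h1 : eqv (eqv.symm c) = c := eqv.apply_symm_apply c
    have h2 : hom.symm c = eqv.symm c := rfl
    rw [h2]
    exact congrArg Subtype.val h1
  set ℓC : ↥C → ℂ := ℓs ∘ hom.symm with hℓC
  have hℓCc : Continuous ℓC := hℓsc.comp hom.symm.continuous
  have hℓCexp : ∀ c : ↥C, Complex.exp (ℓC c) = ψ (c : E2) - ψ q := by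
    intro c
    show Complex.exp (ℓs (hom.symm c)) = _
    rw [hℓsexp, hominv]
  -- Tietze extension
  obtain ⟨L, hL⟩ := ContinuousMap.exists_restrict_eq (Y := ℂ) hCcl ⟨ℓC, hℓCc⟩
  have hLC : ∀ c (hc : c ∈ C), Complex.exp (L c) = ψ c - ψ q := by
    intro c hc
    have h1 := DFunLike.congr_fun hL (⟨c, hc⟩ : ↥C)
    rw [ContinuousMap.restrict_apply] at h1
    rw [h1]
    exact hℓCexp _
  -- glue the nonvanishing map F
  set F : E2 → ℂ :=
    (closure U).piecewise (fun y => Complex.exp (L y)) (fun y => ψ y - ψ q) with hF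
  have hfrsub : frontier (closure U) ⊆ C :=
    fun a ha => frontier_cci hCcl p (frontier_closure_subset ha)
  have hagree : ∀ a ∈ frontier (closure U), Complex.exp (L a) = ψ a - ψ q :=
    fun a ha => hLC a (hfrsub ha)
  have hFc : Continuous F :=
    Continuous.piecewise hagree (Complex.continuous_exp.comp L.continuous)
      (ψ.continuous.sub continuous_const)
  have hqclU : q ∈ closure U := subset_closure hqU
  have hFne : ∀ y, F y ≠ 0 := by
    intro y
    by_cases hy : y ∈ closure U
    · rw [hF, Set.piecewise_eq_of_mem _ _ _ hy]; exact Complex.exp_ne_zero _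
    · rw [hF, Set.piecewise_eq_of_notMem _ _ _ hy]
      intro h
      rw [sub_eq_zero] at h
      exact hy (ψ.injective h ▸ hqclU)
  -- a large circle around q
  obtain ⟨r, hrball⟩ := hbd.subset_closedBall q
  set R : ℝ := max r 0 + 1 with hR
  have hRpos : 0 < R := by positivity
  have hrR : r < R := lt_of_le_of_lt (le_max_left r 0) (by rw [hR]; linarith)
  have hclball : closure U ⊆ Metric.closedBall q r :=
    closure_minimal hrball Metric.isClosed_closedBall
  set Hb : unitInterval × unitInterval → ℂ := fun ts =>
    F (q + ψ.symm ((((ts.2 : ℝ) * R : ℝ) : ℂ) *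
      Complex.exp (2 * Real.pi * Complex.I * ((ts.1 : ℝ) : ℂ)))) with hHb
  have hHbc : Continuous Hb := by
    apply hFc.comp
    apply continuous_const.add
    apply ψ.symm.continuous.comp
    exact ((Complex.continuous_ofReal.comp
        ((continuous_subtype_val.comp continuous_snd).mul continuous_const)).mul
      (Complex.continuous_exp.comp (continuous_const.mul
        (Complex.continuous_ofReal.comp (continuous_subtype_val.comp continuous_fst)))))
  have hHbne : ∀ x, Hb x ≠ 0 := fun x => hFne _
  have hHbloop : ∀ s, Hb (0, s) = Hb (1, s) := by
    intro s
    have hexp01 : Complex.exp (2 * Real.pi * Complex.I * (((0 : unitInterval) : ℝ) : ℂ))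
        = Complex.exp (2 * Real.pi * Complex.I * (((1 : unitInterval) : ℝ) : ℂ)) := by
      rw [show (((0 : unitInterval) : ℝ) : ℂ) = 0 by norm_num,
        show (((1 : unitInterval) : ℝ) : ℂ) = 1 by norm_num]
      rw [mul_zero, Complex.exp_zero, mul_one, Complex.exp_two_pi_mul_I]
    show F _ = F _
    rw [hexp01]
  have hHb0 : HasClosedLog (fun t => Hb (t, 0)) := by
    have he : (fun t => Hb (t, 0)) = fun _ => F q := by
      funext t
      show F _ = F q
      congr 1
      rw [show ((((0 : unitInterval) : ℝ) * R : ℝ) : ℂ) = 0 by norm_num]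
      rw [zero_mul, map_zero, add_zero]
    rw [he]
    exact hasClosedLog_const (hFne q)
  have hHb1 := HasClosedLog.of_homotopy hHbc hHbne hHbloop hHb0 1
  have hfin : (fun t => Hb (t, 1)) =
      fun t : unitInterval => (R : ℂ) * Complex.exp (2 * Real.pi * Complex.I * ((t : ℝ) : ℂ)) := by
    funext t
    show F (q + ψ.symm _) = _
    rw [show ((((1 : unitInterval) : ℝ) * R : ℝ) : ℂ) = (R : ℂ) by norm_num]
    set w : ℂ := (R : ℂ) * Complex.exp (2 * Real.pi * Complex.I * ((t : ℝ) : ℂ)) with hwdef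
    have hnot : q + ψ.symm w ∉ closure U := by
      intro hmem
      have h1 := hclball hmem
      rw [Metric.mem_closedBall] at h1
      have hd : dist (q + ψ.symm w) q = R := by
        rw [dist_eq_norm, add_sub_cancel_left, ψ.symm.norm_map,
          hwdef, norm_mul, Complex.norm_real, Real.norm_eq_abs, abs_exp2πi, mul_one, abs_of_pos hRpos]
      rw [hd] at h1
      linarith
    rw [hF, Set.piecewise_eq_of_notMem _ _ _ hnot]
    rw [map_add, ψ.apply_symm_apply, add_sub_cancel_left]
  rw [hfin] at hHb1
  exact not_hasClosedLog_circle hRpos hHb1
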